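/- Let p₁ and p₂ be distinct odd primes, n an integer, and let χ₁, χ₂, χ₃ be Dirichlet characters modulo p₁. Then |B(p₁, (1, p₁², p₂², n); χ₁, χ₂, χ₃)| ≤ 4 · gcd(n, p₁)^{1/2} · p₁^{3/2} / (p₁−1)². -/

import Mathlib

/-- `S(χ,a) = ∑_{h=1}^{q} conj(χ)(h) e_q(a h²)` for a Dirichlet character χ mod q. -/
noncomputable def Schar {q : ℕ} (χ : DirichletCharacter ℂ q) (a : ℤ) : ℂ :=
  ∑ h ∈ Finset.Icc 1 q,
    (starRingEnd ℂ) (χ (h : ZMod q)) *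
      Complex.exp (2 * (Real.pi : ℂ) * Complex.I * ((a : ℂ) * (h : ℂ) ^ 2) / (q : ℂ))

/-- `B(q, (b₁,b₂,b₃,b₄); χ₁, χ₂, χ₃)
  = φ(q)⁻³ ∑_{1 ≤ a ≤ q, gcd(a,q)=1} S(χ₁,ab₁) S(χ₂,ab₂) S(χ₃,ab₃) e_q(−ab₄)`. -/
noncomputable def Bsum (q : ℕ) (b₁ b₂ b₃ b₄ : ℤ) (χ₁ χ₂ χ₃ : DirichletCharacter ℂ q) : ℂ :=
  ((q.totient : ℂ))⁻¹ ^ 3 *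
    ∑ a ∈ (Finset.Icc 1 q).filter (fun a => Nat.gcd a q = 1),
      Schar χ₁ ((a : ℤ) * b₁) * Schar χ₂ ((a : ℤ) * b₂) * Schar χ₃ ((a : ℤ) * b₃) *
        Complex.exp (-(2 * (Real.pi : ℂ) * Complex.I * ((a : ℂ) * (b₄ : ℂ)) / (q : ℂ)))

/-- Compatibility: the complex absolute value as a bundled absolute value. -/
noncomputable def Complex.abs : AbsoluteValue ℂ ℝ where
  toFun z := ‖z‖
  map_mul' := norm_mul
  nonneg' := norm_nonneg
  eq_zero' _ := norm_eq_zero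
  add_le' := norm_add_le

lemma Complex.norm_eq_abs (z : ℂ) : ‖z‖ = Complex.abs z := rfl

lemma Complex.abs_exp_ofReal_mul_I (x : ℝ) :
    Complex.abs (Complex.exp (x * Complex.I)) = 1 := Complex.norm_exp_ofReal_mul_I x

lemma Complex.abs_natCast (n : ℕ) : Complex.abs (n : ℂ) = n := by
  show ‖(n : ℂ)‖ = n
  simp

lemma Complex.abs_conj (z : ℂ) : Complex.abs ((starRingEnd ℂ) z) = Complex.abs z :=
  Complex.norm_conj z

lemma Complex.abs_two : Complex.abs (2 : ℂ) = 2 := by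
  show ‖(2 : ℂ)‖ = 2
  simp

lemma Complex.abs_ofReal (x : ℝ) : Complex.abs (x : ℂ) = |x| := by
  show ‖(x : ℂ)‖ = |x|
  simp

lemma Complex.sq_abs (z : ℂ) : Complex.abs z ^ 2 = Complex.normSq z := Complex.sq_norm z

namespace BsumAux

open Finset

variable {p : ℕ} [Fact p.Prime]

local instance : NeZero p := ⟨(Fact.out : p.Prime).ne_zero⟩

/-- The basic twisted quadratic exponential sum over `ZMod p`. -/
noncomputable def V (χ : DirichletCharacter ℂ p) (u : ZMod p) : ℂ :=
  ∑ x : ZMod p, χ x * ZMod.stdAddChar (u * x ^ 2)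

lemma abs_char_le (χ : DirichletCharacter ℂ p) (x : ZMod p) : Complex.abs (χ x) ≤ 1 := by
  simpa [Complex.norm_eq_abs] using χ.norm_le_one x

lemma abs_char_eq_one (χ : DirichletCharacter ℂ p) {x : ZMod p} (hx : x ≠ 0) :
    Complex.abs (χ x) = 1 := by
  have h : IsUnit x := isUnit_iff_ne_zero.mpr hx
  simpa [Complex.norm_eq_abs, h.unit_spec] using χ.unit_norm_eq_one h.unit

lemma char_zero' (χ : DirichletCharacter ℂ p) : χ (0 : ZMod p) = 0 :=
  χ.map_nonunit (by simpa using not_isUnit_zero)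

lemma psi_int (j : ℤ) :
    ZMod.stdAddChar ((j : ZMod p)) = Complex.exp (2 * Real.pi * Complex.I * j / p) :=
  ZMod.stdAddChar_coe j

lemma cast_val_int (x : ZMod p) : (((x.val : ℤ) : ZMod p)) = x := by
  push_cast
  exact ZMod.natCast_rightInverse x

lemma abs_psi (x : ZMod p) : Complex.abs (ZMod.stdAddChar x) = 1 := by
  rw [← cast_val_int x, psi_int]
  have h : 2 * (Real.pi : ℂ) * Complex.I * ((x.val : ℤ) : ℂ) / p
      = ((2 * Real.pi * (x.val : ℤ) / p : ℝ) : ℂ) * Complex.I := by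
    push_cast; ring
  rw [h, Complex.abs_exp_ofReal_mul_I]

lemma conj_psi (x : ZMod p) :
    (starRingEnd ℂ) (ZMod.stdAddChar x) = ZMod.stdAddChar (-x) := by
  conv_lhs => rw [← cast_val_int x]
  conv_rhs => rw [← cast_val_int x]
  rw [← Int.cast_neg, psi_int, psi_int, ← Complex.exp_conj]
  congr 1
  have : ((starRingEnd ℂ) ((x.val : ℤ) : ℂ)) = ((x.val : ℤ) : ℂ) := map_intCast _ _
  simp only [map_div₀, map_mul, Complex.conj_I, Complex.conj_ofReal, map_ofNat, this,
    map_intCast, map_natCast]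
  push_cast
  ring

lemma sum_psi (t : ZMod p) :
    ∑ x : ZMod p, ZMod.stdAddChar (t * x) = if t = 0 then (p : ℂ) else 0 := by
  split_ifs with h
  · simp [h, ZMod.card]
  · have h2 := AddChar.sum_eq_zero_of_ne_one
      (ψ := (ZMod.stdAddChar (N := p)).mulShift t) (ZMod.isPrimitive_stdAddChar p h)
    simpa [AddChar.mulShift_apply] using h2

lemma sum_abs_char_le (χ : DirichletCharacter ℂ p) :
    ∑ x : ZMod p, Complex.abs (χ x) ≤ (p : ℝ) - 1 := by
  have h0 : (0 : ZMod p) ∈ (univ : Finset (ZMod p)) := mem_univ _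
  rw [← Finset.sum_erase_add _ _ h0, char_zero']
  simp only [map_zero, add_zero]
  calc ∑ x ∈ univ.erase (0 : ZMod p), Complex.abs (χ x)
      ≤ ∑ _x ∈ univ.erase (0 : ZMod p), (1 : ℝ) :=
        Finset.sum_le_sum fun x _ => abs_char_le χ x
    _ = ((univ.erase (0 : ZMod p)).card : ℝ) := by simp
    _ = (p : ℝ) - 1 := by
        rw [Finset.card_erase_of_mem h0, card_univ, ZMod.card]
        have := (Fact.out : p.Prime).one_lt
        push_cast [Nat.cast_sub this.le]
        ring

lemma abs_V_le (χ : DirichletCharacter ℂ p) (u : ZMod p) :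
    Complex.abs (V χ u) ≤ (p : ℝ) - 1 := by
  refine le_trans (Complex.abs.sum_le _ _) ?_
  refine le_trans ?_ (sum_abs_char_le χ)
  refine Finset.sum_le_sum fun x _ => ?_
  rw [map_mul, abs_psi, mul_one]

lemma V_mul_sq (χ : DirichletCharacter ℂ p) (u : ZMod p) {c : ZMod p} (hc : c ≠ 0) :
    V χ (u * c ^ 2) = χ c⁻¹ * V χ u := by
  have hinv : c⁻¹ ≠ 0 := inv_ne_zero hc
  rw [V, V, Finset.mul_sum]
  rw [← Equiv.sum_comp (Equiv.mulLeft₀ c⁻¹ hinv) (fun x => χ x * ZMod.stdAddChar (u * c ^ 2 * x ^ 2))]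
  refine Finset.sum_congr rfl fun y _ => ?_
  have h1 : (Equiv.mulLeft₀ c⁻¹ hinv) y = c⁻¹ * y := rfl
  rw [h1, map_mul]
  have h2 : u * c ^ 2 * (c⁻¹ * y) ^ 2 = u * y ^ 2 := by
    field_simp
  rw [h2]
  ring

lemma abs_V_mul_sq (χ : DirichletCharacter ℂ p) (u : ZMod p) {c : ZMod p} (hc : c ≠ 0) :
    Complex.abs (V χ (u * c ^ 2)) = Complex.abs (V χ u) := by
  rw [V_mul_sq χ u hc, map_mul, abs_char_eq_one χ (inv_ne_zero hc), one_mul]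

lemma moment (hodd : p ≠ 2) (χ : DirichletCharacter ℂ p) :
    ∑ u : ZMod p, (Complex.abs (V χ u)) ^ 2 ≤ 2 * p * ((p : ℝ) - 1) := by
  classical
  have key : ∑ u : ZMod p, (V χ u * (starRingEnd ℂ) (V χ u))
      = (p : ℂ) * ∑ x : ZMod p, χ x * ((starRingEnd ℂ) (χ x) + (starRingEnd ℂ) (χ (-x))) := by
    have expand : ∀ u : ZMod p, V χ u * (starRingEnd ℂ) (V χ u)
        = ∑ x : ZMod p, ∑ y : ZMod p,
            χ x * (starRingEnd ℂ) (χ y) * ZMod.stdAddChar ((x ^ 2 - y ^ 2) * u) := by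
      intro u
      rw [V, map_sum, Finset.sum_mul_sum]
      refine Finset.sum_congr rfl fun x _ => Finset.sum_congr rfl fun y _ => ?_
      have hconj : (starRingEnd ℂ) (χ y * ZMod.stdAddChar (u * y ^ 2))
          = (starRingEnd ℂ) (χ y) * ZMod.stdAddChar (-(u * y ^ 2)) := by
        rw [RingHom.map_mul, conj_psi]
      rw [hconj]
      have : ZMod.stdAddChar (u * x ^ 2) * ZMod.stdAddChar (-(u * y ^ 2))
          = ZMod.stdAddChar ((x ^ 2 - y ^ 2) * u) := by
        rw [← AddChar.map_add_eq_mul]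
        congr 1
        ring
      calc χ x * ZMod.stdAddChar (u * x ^ 2) * ((starRingEnd ℂ) (χ y) * ZMod.stdAddChar (-(u * y ^ 2)))
          = χ x * (starRingEnd ℂ) (χ y) * (ZMod.stdAddChar (u * x ^ 2) * ZMod.stdAddChar (-(u * y ^ 2))) := by ring
        _ = _ := by rw [this]
    calc ∑ u : ZMod p, (V χ u * (starRingEnd ℂ) (V χ u))
        = ∑ u : ZMod p, ∑ x : ZMod p, ∑ y : ZMod p,
            χ x * (starRingEnd ℂ) (χ y) * ZMod.stdAddChar ((x ^ 2 - y ^ 2) * u) :=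
          Finset.sum_congr rfl fun u _ => expand u
      _ = ∑ x : ZMod p, ∑ y : ZMod p, ∑ u : ZMod p,
            χ x * (starRingEnd ℂ) (χ y) * ZMod.stdAddChar ((x ^ 2 - y ^ 2) * u) := by
          rw [Finset.sum_comm]
          exact Finset.sum_congr rfl fun x _ => Finset.sum_comm
      _ = ∑ x : ZMod p, ∑ y : ZMod p,
            χ x * (starRingEnd ℂ) (χ y) * (if x ^ 2 - y ^ 2 = 0 then (p : ℂ) else 0) := by
          refine Finset.sum_congr rfl fun x _ => Finset.sum_congr rfl fun y _ => ?_
          rw [← Finset.mul_sum, sum_psi]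
      _ = (p : ℂ) * ∑ x : ZMod p, χ x * ((starRingEnd ℂ) (χ x) + (starRingEnd ℂ) (χ (-x))) := by
          rw [Finset.mul_sum]
          refine Finset.sum_congr rfl fun x _ => ?_
          have hset : (univ.filter fun y : ZMod p => x ^ 2 - y ^ 2 = 0) = ({x, -x} : Finset (ZMod p)) := by
            ext y
            simp only [Finset.mem_filter, Finset.mem_univ, true_and, Finset.mem_insert,
              Finset.mem_singleton, sub_eq_zero]
            constructor
            · intro h
              have h' : y * y = x * x := by
                have := h.symm
                rwa [sq, sq] at this
              rcases mul_self_eq_mul_self_iff.mp h' with h1 | h1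
              · exact Or.inl h1
              · exact Or.inr h1
            · rintro (rfl | rfl) <;> ring
          calc ∑ y : ZMod p, χ x * (starRingEnd ℂ) (χ y) * (if x ^ 2 - y ^ 2 = 0 then (p : ℂ) else 0)
              = ∑ y ∈ univ.filter (fun y : ZMod p => x ^ 2 - y ^ 2 = 0),
                  χ x * (starRingEnd ℂ) (χ y) * (p : ℂ) := by
                rw [Finset.sum_filter]
                refine Finset.sum_congr rfl fun y _ => ?_
                by_cases h : x ^ 2 - y ^ 2 = 0 <;> simp [h]
            _ = ∑ y ∈ ({x, -x} : Finset (ZMod p)), χ x * (starRingEnd ℂ) (χ y) * (p : ℂ) := by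
                rw [hset]
            _ = (p : ℂ) * (χ x * ((starRingEnd ℂ) (χ x) + (starRingEnd ℂ) (χ (-x)))) := by
                by_cases hx : x = 0
                · subst hx
                  simp [char_zero']
                · have hne : x ≠ -x := by
                    intro h
                    have h2 : (2 : ZMod p) * x = 0 := by
                      rw [two_mul]
                      nth_rewrite 2 [h]
                      ring
                    have h2ne : (2 : ZMod p) ≠ 0 := by
                      have : ((2 : ℕ) : ZMod p) ≠ 0 := by
                        rw [Ne, ZMod.natCast_eq_zero_iff]
                        intro hdvd
                        rcases (Nat.prime_dvd_prime_iff_eq (Fact.out : p.Prime) Nat.prime_two).mp hdvd with h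
                        exact hodd h
                      simpa using this
                    rcases mul_eq_zero.mp h2 with h | h
                    · exact h2ne h
                    · exact hx h
                  rw [Finset.sum_pair hne]
                  ring
  -- now convert to absolute values
  have hcast : ((∑ u : ZMod p, (Complex.abs (V χ u)) ^ 2 : ℝ) : ℂ)
      = ∑ u : ZMod p, (V χ u * (starRingEnd ℂ) (V χ u)) := by
    push_cast
    refine Finset.sum_congr rfl fun u _ => ?_
    rw [← Complex.ofReal_pow, Complex.sq_abs, Complex.mul_conj]
  have habs : ∑ u : ZMod p, (Complex.abs (V χ u)) ^ 2
      = Complex.abs ((p : ℂ) * ∑ x : ZMod p, χ x * ((starRingEnd ℂ) (χ x) + (starRingEnd ℂ) (χ (-x)))) := by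
    rw [← key, ← hcast, Complex.abs_ofReal, abs_of_nonneg]
    exact Finset.sum_nonneg fun u _ => sq_nonneg _
  rw [habs, map_mul, Complex.abs_natCast]
  have hbound : Complex.abs (∑ x : ZMod p, χ x * ((starRingEnd ℂ) (χ x) + (starRingEnd ℂ) (χ (-x))))
      ≤ 2 * ((p : ℝ) - 1) := by
    refine le_trans (Complex.abs.sum_le _ _) ?_
    have step : ∀ x : ZMod p, Complex.abs (χ x * ((starRingEnd ℂ) (χ x) + (starRingEnd ℂ) (χ (-x))))
        ≤ 2 * Complex.abs (χ x) := by
      intro x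
      rw [map_mul]
      have h1 : Complex.abs ((starRingEnd ℂ) (χ x) + (starRingEnd ℂ) (χ (-x))) ≤ 2 := by
        refine le_trans (Complex.abs.add_le _ _) ?_
        rw [Complex.abs_conj, Complex.abs_conj]
        linarith [abs_char_le χ x, abs_char_le χ (-x)]
      calc Complex.abs (χ x) * Complex.abs ((starRingEnd ℂ) (χ x) + (starRingEnd ℂ) (χ (-x)))
          ≤ Complex.abs (χ x) * 2 := by
            exact mul_le_mul_of_nonneg_left h1 (Complex.abs.nonneg _)
        _ = 2 * Complex.abs (χ x) := by ring
    calc ∑ x : ZMod p, Complex.abs (χ x * ((starRingEnd ℂ) (χ x) + (starRingEnd ℂ) (χ (-x))))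
        ≤ ∑ x : ZMod p, 2 * Complex.abs (χ x) := Finset.sum_le_sum fun x _ => step x
      _ = 2 * ∑ x : ZMod p, Complex.abs (χ x) := by rw [Finset.mul_sum]
      _ ≤ 2 * ((p : ℝ) - 1) := by linarith [sum_abs_char_le χ]
  calc (p : ℝ) * Complex.abs (∑ x : ZMod p, χ x * ((starRingEnd ℂ) (χ x) + (starRingEnd ℂ) (χ (-x))))
      ≤ (p : ℝ) * (2 * ((p : ℝ) - 1)) := by
        exact mul_le_mul_of_nonneg_left hbound (Nat.cast_nonneg p)
    _ = 2 * p * ((p : ℝ) - 1) := by ring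

lemma two_ne_zero' (hodd : p ≠ 2) : (2 : ZMod p) ≠ 0 := by
  have : ((2 : ℕ) : ZMod p) ≠ 0 := by
    rw [Ne, ZMod.natCast_eq_zero_iff]
    intro hdvd
    exact hodd ((Nat.prime_dvd_prime_iff_eq (Fact.out : p.Prime) Nat.prime_two).mp hdvd)
  simpa using this

lemma sqcount (hodd : p ≠ 2) {s : ZMod p} (hs : s ≠ 0) :
    (univ.filter fun c : ZMod p => c ^ 2 = s).card = if IsSquare s then 2 else 0 := by
  split_ifs with h
  · obtain ⟨c₀, hc₀⟩ := h
    have hc0 : c₀ ≠ 0 := by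
      rintro rfl
      rw [mul_zero] at hc₀
      exact hs hc₀
    have hset : (univ.filter fun c : ZMod p => c ^ 2 = s) = ({c₀, -c₀} : Finset (ZMod p)) := by
      ext c
      simp only [Finset.mem_filter, Finset.mem_univ, true_and, Finset.mem_insert,
        Finset.mem_singleton]
      constructor
      · intro hcc
        have h' : c * c = c₀ * c₀ := by rw [← sq, hcc, hc₀]
        exact mul_self_eq_mul_self_iff.mp h'
      · rintro (rfl | rfl)
        · rw [hc₀, sq]
        · rw [hc₀]; ring
    rw [hset]
    rw [Finset.card_insert_of_notMem, Finset.card_singleton]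
    simp only [Finset.mem_singleton]
    intro heq
    have h2 : (2 : ZMod p) * c₀ = 0 := by
      nth_rewrite 1 [two_mul, heq]
      ring
    rcases mul_eq_zero.mp h2 with h | h
    · exact two_ne_zero' hodd h
    · exact hc0 h
  · rw [Finset.card_eq_zero, Finset.filter_eq_empty_iff]
    intro c _
    intro hcc
    exact h ⟨c, by rw [← hcc, sq]⟩

lemma nonsquare_inv {γ : ZMod p} (hγ : ¬ IsSquare γ) : ¬ IsSquare γ⁻¹ := by
  intro ⟨d, hd⟩
  have hγ0 : γ ≠ 0 := by rintro rfl; exact hγ ⟨0, by simp⟩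
  refine hγ ⟨d⁻¹, ?_⟩
  have : γ = (γ⁻¹)⁻¹ := (inv_inv γ).symm
  rw [this, hd, mul_inv]

lemma xor_sq {γ : ZMod p} (hγ : ¬ IsSquare γ) {s : ZMod p} (hs : s ≠ 0) :
    IsSquare (γ * s) ↔ ¬ IsSquare s := by
  have hγ0 : γ ≠ 0 := by rintro rfl; exact hγ ⟨0, by simp⟩
  have hγs : γ * s ≠ 0 := mul_ne_zero hγ0 hs
  have hqγ : quadraticChar (ZMod p) γ = -1 := quadraticChar_neg_one_iff_not_isSquare.mpr hγ
  constructor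
  · intro hsq hsq2
    have h1 : quadraticChar (ZMod p) (γ * s) = 1 :=
      (quadraticChar_one_iff_isSquare hγs).mpr hsq
    have h2 : quadraticChar (ZMod p) s = 1 :=
      (quadraticChar_one_iff_isSquare hs).mpr hsq2
    rw [map_mul, hqγ, h2] at h1
    norm_num at h1
  · intro hns
    have h2 : quadraticChar (ZMod p) s = -1 := quadraticChar_neg_one_iff_not_isSquare.mpr hns
    refine (quadraticChar_one_iff_isSquare hγs).mp ?_
    rw [map_mul, hqγ, h2]
    norm_num

lemma counting {M : Type*} [AddCommMonoid M] (hodd : p ≠ 2) (G : ZMod p → M)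
    {u γ : ZMod p} (hu : u ≠ 0) (hγ : ¬ IsSquare γ) :
    ∑ c ∈ univ.erase (0 : ZMod p), (G (u * c ^ 2) + G (u * γ * c ^ 2))
      = 2 • ∑ w ∈ univ.erase (0 : ZMod p), G w := by
  classical
  have hγ0 : γ ≠ 0 := by rintro rfl; exact hγ ⟨0, by simp⟩
  have gen : ∀ v : ZMod p, v ≠ 0 → ∑ c ∈ univ.erase (0 : ZMod p), G (v * c ^ 2)
      = ∑ w ∈ univ.erase (0 : ZMod p),
          (((univ.erase (0 : ZMod p)).filter fun c => v * c ^ 2 = w).card) • G w := by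
    intro v hv
    have hmaps : ∀ c ∈ univ.erase (0 : ZMod p), v * c ^ 2 ∈ univ.erase (0 : ZMod p) := by
      intro c hc
      rw [Finset.mem_erase]
      exact ⟨mul_ne_zero hv (pow_ne_zero 2 (Finset.mem_erase.mp hc).1), Finset.mem_univ _⟩
    calc ∑ c ∈ univ.erase (0 : ZMod p), G (v * c ^ 2)
        = ∑ w ∈ univ.erase (0 : ZMod p),
            ∑ _c ∈ (univ.erase (0 : ZMod p)).filter (fun c => v * c ^ 2 = w), G w :=
          (Finset.sum_fiberwise_of_maps_to' hmaps G).symm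
      _ = ∑ w ∈ univ.erase (0 : ZMod p),
            (((univ.erase (0 : ZMod p)).filter fun c => v * c ^ 2 = w).card) • G w :=
          Finset.sum_congr rfl fun w _ => Finset.sum_const (G w)
  rw [Finset.sum_add_distrib, gen u hu, gen _ (mul_ne_zero hu hγ0), ← Finset.sum_add_distrib,
    Finset.smul_sum]
  refine Finset.sum_congr rfl fun w hw => ?_
  have hw0 : w ≠ 0 := (Finset.mem_erase.mp hw).1
  have hcard : ∀ v : ZMod p, v ≠ 0 →
      ((univ.erase (0 : ZMod p)).filter fun c => v * c ^ 2 = w).card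
        = (univ.filter fun c : ZMod p => c ^ 2 = v⁻¹ * w).card := by
    intro v hv
    congr 1
    ext c
    simp only [Finset.mem_filter, Finset.mem_erase, Finset.mem_univ, true_and, and_true]
    constructor
    · rintro ⟨hc0, hc⟩
      rw [← hc]
      field_simp
    · intro hc
      have hc0 : c ≠ 0 := by
        rintro rfl
        have h0 : (0 : ZMod p) = v⁻¹ * w := by
          rw [← zero_pow (two_ne_zero), hc]
        rcases mul_eq_zero.mp h0.symm with h | h
        · exact inv_ne_zero hv h
        · exact hw0 h
      constructor
      · exact hc0
      · rw [hc]
        field_simp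
    
  rw [hcard u hu, hcard _ (mul_ne_zero hu hγ0)]
  have hs1 : u⁻¹ * w ≠ 0 := mul_ne_zero (inv_ne_zero hu) hw0
  have key : (u * γ)⁻¹ * w = γ⁻¹ * (u⁻¹ * w) := by
    rw [mul_inv]
    ring
  rw [sqcount hodd hs1, key, sqcount hodd (mul_ne_zero (inv_ne_zero hγ0) hs1)]
  have hxor := xor_sq (nonsquare_inv hγ) hs1
  by_cases h : IsSquare (u⁻¹ * w)
  · rw [if_pos h, if_neg (by rw [hxor]; exact fun hh => hh h)]
    rw [← add_nsmul]
  · rw [if_neg h, if_pos (hxor.mpr h), ← add_nsmul]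

lemma pair_moment (hodd : p ≠ 2) (χ : DirichletCharacter ℂ p) {u γ : ZMod p}
    (hu : u ≠ 0) (hγ : ¬ IsSquare γ) :
    (Complex.abs (V χ u)) ^ 2 + (Complex.abs (V χ (u * γ))) ^ 2 ≤ 4 * p := by
  have hγ0 : γ ≠ 0 := by rintro rfl; exact hγ ⟨0, by simp⟩
  have hp1 : (1 : ℝ) ≤ (p : ℝ) - 1 := by
    have := (Fact.out : p.Prime).two_le
    have : (2 : ℝ) ≤ (p : ℝ) := by exact_mod_cast this
    linarith
  have h1 : ((p : ℝ) - 1) * ((Complex.abs (V χ u)) ^ 2 + (Complex.abs (V χ (u * γ))) ^ 2)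
      = ∑ c ∈ univ.erase (0 : ZMod p),
          ((Complex.abs (V χ (u * c ^ 2))) ^ 2 + (Complex.abs (V χ (u * γ * c ^ 2))) ^ 2) := by
    rw [Finset.sum_congr rfl (fun c hc => by
      rw [abs_V_mul_sq χ u (Finset.mem_erase.mp hc).1,
        abs_V_mul_sq χ (u * γ) (Finset.mem_erase.mp hc).1])]
    rw [Finset.sum_const, Finset.card_erase_of_mem (Finset.mem_univ _), card_univ, ZMod.card]
    rw [nsmul_eq_mul]
    congr 1
    have := (Fact.out : p.Prime).one_lt
    push_cast [Nat.cast_sub this.le]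
    ring
  have h2 := counting (M := ℝ) hodd (fun w => (Complex.abs (V χ w)) ^ 2) hu hγ
  have h3 : ∑ w ∈ univ.erase (0 : ZMod p), (Complex.abs (V χ w)) ^ 2
      ≤ 2 * p * ((p : ℝ) - 1) := by
    refine le_trans (Finset.sum_le_sum_of_subset_of_nonneg (Finset.subset_univ _)
      (fun w _ _ => sq_nonneg _)) (moment hodd χ)
  have h4 : ((p : ℝ) - 1) * ((Complex.abs (V χ u)) ^ 2 + (Complex.abs (V χ (u * γ))) ^ 2)
      ≤ 2 * (2 * p * ((p : ℝ) - 1)) := by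
    rw [h1, h2]
    rw [nsmul_eq_mul]
    push_cast
    linarith
  have hp0 : (0 : ℝ) < (p : ℝ) - 1 := by linarith
  nlinarith [h4]

lemma sum_Icc_eq (g : ZMod p → ℂ) :
    ∑ h ∈ Finset.Icc 1 p, g ((h : ℕ) : ZMod p) = ∑ x : ZMod p, g x := by
  have hp1 : 1 ≤ p := (Fact.out : p.Prime).one_lt.le
  refine Finset.sum_nbij' (fun h : ℕ => ((h : ℕ) : ZMod p))
    (fun x : ZMod p => if x = 0 then p else x.val) ?_ ?_ ?_ ?_ ?_
  · intro a _; exact Finset.mem_univ _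
  · intro x _
    by_cases hx : x = 0
    · rw [if_pos hx]
      exact Finset.mem_Icc.mpr ⟨hp1, le_rfl⟩
    · rw [if_neg hx]
      refine Finset.mem_Icc.mpr ⟨?_, (ZMod.val_lt x).le⟩
      exact Nat.one_le_iff_ne_zero.mpr fun h => hx ((ZMod.val_eq_zero x).mp h)
  · intro a ha
    rcases Finset.mem_Icc.mp ha with ⟨h1, h2⟩
    by_cases hz : ((a : ℕ) : ZMod p) = 0
    · rw [if_pos hz]
      have hdvd : p ∣ a := (ZMod.natCast_eq_zero_iff a p).mp hz
      exact le_antisymm (Nat.le_of_dvd (Nat.lt_of_lt_of_le Nat.zero_lt_one h1) hdvd) h2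
    · rw [if_neg hz]
      have hlt : a < p := by
        rcases lt_or_eq_of_le h2 with h | h
        · exact h
        · exfalso; apply hz; rw [h]; exact ZMod.natCast_self p
      exact ZMod.val_cast_of_lt hlt
  · intro x _
    by_cases hx : x = 0
    · rw [if_pos hx, hx]
      exact ZMod.natCast_self p
    · rw [if_neg hx]
      exact ZMod.natCast_rightInverse x
  · intro a _; rfl

lemma sum_coprime_eq (g : ZMod p → ℂ) :
    ∑ a ∈ (Finset.Icc 1 p).filter (fun a => Nat.gcd a p = 1), g ((a : ℕ) : ZMod p)
      = ∑ w ∈ univ.erase (0 : ZMod p), g w := by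
  have hp := (Fact.out : p.Prime)
  refine Finset.sum_nbij' (fun h : ℕ => ((h : ℕ) : ZMod p)) (fun x : ZMod p => x.val)
    ?_ ?_ ?_ ?_ ?_
  · intro a ha
    rcases Finset.mem_filter.mp ha with ⟨_, hgcd⟩
    refine Finset.mem_erase.mpr ⟨?_, Finset.mem_univ _⟩
    intro hz
    have hdvd : p ∣ a := (ZMod.natCast_eq_zero_iff a p).mp hz
    have : p ∣ 1 := hgcd ▸ Nat.dvd_gcd hdvd dvd_rfl
    exact absurd (Nat.le_of_dvd Nat.one_pos this) (not_le.mpr hp.one_lt)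
  · intro x hx
    have hx0 : x ≠ 0 := (Finset.mem_erase.mp hx).1
    have hv0 : x.val ≠ 0 := fun h => hx0 ((ZMod.val_eq_zero x).mp h)
    refine Finset.mem_filter.mpr ⟨Finset.mem_Icc.mpr
      ⟨Nat.one_le_iff_ne_zero.mpr hv0, (ZMod.val_lt x).le⟩, ?_⟩
    have hnd : ¬ p ∣ x.val := fun hd => hv0 (Nat.eq_zero_of_dvd_of_lt hd (ZMod.val_lt x))
    exact Nat.Coprime.gcd_eq_one ((Nat.coprime_comm).mp (hp.coprime_iff_not_dvd.mpr hnd))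
  · intro a ha
    rcases Finset.mem_filter.mp ha with ⟨hIcc, hgcd⟩
    rcases Finset.mem_Icc.mp hIcc with ⟨h1, h2⟩
    have hlt : a < p := by
      rcases lt_or_eq_of_le h2 with h | h
      · exact h
      · exfalso
        rw [h, Nat.gcd_self] at hgcd
        exact hp.one_lt.ne' hgcd
    exact ZMod.val_cast_of_lt hlt
  · intro x _
    exact ZMod.natCast_rightInverse x
  · intro a _; rfl

lemma Schar_eq (χ : DirichletCharacter ℂ p) (m : ℤ) :
    Schar χ m = V (χ.ringHomComp (starRingEnd ℂ)) ((m : ZMod p)) := by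
  rw [Schar, V, ← sum_Icc_eq (fun x => (χ.ringHomComp (starRingEnd ℂ)) x
    * ZMod.stdAddChar ((m : ZMod p) * x ^ 2))]
  refine Finset.sum_congr rfl fun h _ => ?_
  have hcast : ((m * (h : ℤ) ^ 2 : ℤ) : ZMod p) = (m : ZMod p) * ((h : ℕ) : ZMod p) ^ 2 := by
    push_cast; ring
  have h2 : Complex.exp (2 * (Real.pi : ℂ) * Complex.I * ((m : ℂ) * ((h : ℕ) : ℂ) ^ 2) / p)
      = ZMod.stdAddChar ((m : ZMod p) * ((h : ℕ) : ZMod p) ^ 2) := by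
    rw [← hcast, psi_int]
    congr 1
    push_cast
    ring
  rw [h2]
  rfl

lemma cube_bound {A x X y Y z Z : ℝ} (hx : 0 ≤ x) (hX : 0 ≤ X) (hy : 0 ≤ y) (hY : 0 ≤ Y)
    (hz : 0 ≤ z) (hZ : 0 ≤ Z) (h1 : x ^ 2 + X ^ 2 ≤ A) (h2 : y ^ 2 + Y ^ 2 ≤ A)
    (h3 : z ^ 2 + Z ^ 2 ≤ A) : x * y * z + X * Y * Z ≤ A * Real.sqrt A := by
  have hA : 0 ≤ A := le_trans (by positivity) h1
  have hL : 0 ≤ x * y * z + X * Y * Z := by positivity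
  have s1 : (x * y * z + X * Y * Z) ^ 2 ≤ (x ^ 2 + X ^ 2) * ((y * z) ^ 2 + (Y * Z) ^ 2) := by
    nlinarith [sq_nonneg (x * (Y * Z) - X * (y * z))]
  have s2 : (y * z) ^ 2 + (Y * Z) ^ 2 ≤ (y ^ 2 + Y ^ 2) * (z ^ 2 + Z ^ 2) := by
    nlinarith [sq_nonneg (y * Z), sq_nonneg (Y * z)]
  have s3 : (y ^ 2 + Y ^ 2) * (z ^ 2 + Z ^ 2) ≤ A * A :=
    mul_le_mul h2 h3 (by positivity) (le_trans (by positivity) h2)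
  have hsq : (x * y * z + X * Y * Z) ^ 2 ≤ A ^ 3 := by
    calc (x * y * z + X * Y * Z) ^ 2 ≤ (x ^ 2 + X ^ 2) * ((y * z) ^ 2 + (Y * Z) ^ 2) := s1
      _ ≤ A * (A * A) := mul_le_mul h1 (s2.trans s3) (by positivity) hA
      _ = A ^ 3 := by ring
  calc x * y * z + X * Y * Z = Real.sqrt ((x * y * z + X * Y * Z) ^ 2) :=
        (Real.sqrt_sq hL).symm
    _ ≤ Real.sqrt (A ^ 3) := Real.sqrt_le_sqrt hsq
    _ = A * Real.sqrt A := by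
        rw [pow_succ, Real.sqrt_mul (by positivity), Real.sqrt_sq hA]

end BsumAux

open BsumAux Finset in
/-- For distinct odd primes p₁, p₂, n ∈ ℤ and Dirichlet characters χ₁, χ₂, χ₃ mod p₁:
`|B(p₁, (1,p₁²,p₂²,n); χ₁, χ₂, χ₃)| ≤ 4 gcd(n,p₁)^{1/2} p₁^{3/2}/(p₁−1)²`. -/
theorem Bsum_bound_case2 (p₁ p₂ : ℕ) (hp₁ : p₁.Prime) (hp₂ : p₂.Prime)
    (hodd₁ : Odd p₁) (hodd₂ : Odd p₂) (hne : p₁ ≠ p₂)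
    (n : ℤ) (χ₁ χ₂ χ₃ : DirichletCharacter ℂ p₁) :
    ‖Bsum p₁ 1 ((p₁ : ℤ) ^ 2) ((p₂ : ℤ) ^ 2) n χ₁ χ₂ χ₃‖
      ≤ 4 * Real.sqrt (Int.gcd n (p₁ : ℤ)) * (p₁ : ℝ) ^ ((3 : ℝ) / 2) /
          ((p₁ : ℝ) - 1) ^ 2 := by
  rw [Complex.norm_eq_abs]
  haveI : Fact p₁.Prime := ⟨hp₁⟩
  haveI : NeZero p₁ := ⟨hp₁.ne_zero⟩
  have hodd : p₁ ≠ 2 := by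
    rintro rfl
    rw [Nat.odd_iff] at hodd₁
    omega
  have hp3 : 3 ≤ p₁ := by
    have := hp₁.two_le
    omega
  have hPpos : (0 : ℝ) < (p₁ : ℝ) := by
    have : 0 < p₁ := hp₁.pos
    exact_mod_cast this
  have hP3 : (3 : ℝ) ≤ (p₁ : ℝ) := by exact_mod_cast hp3
  have hP1 : (0 : ℝ) < (p₁ : ℝ) - 1 := by linarith
  have hsqP : Real.sqrt (p₁ : ℝ) * Real.sqrt (p₁ : ℝ) = (p₁ : ℝ) :=
    Real.mul_self_sqrt hPpos.le
  have hsqPnn : (0 : ℝ) ≤ Real.sqrt (p₁ : ℝ) := Real.sqrt_nonneg _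
  have hrpow : (p₁ : ℝ) ^ ((3 : ℝ) / 2) = (p₁ : ℝ) * Real.sqrt (p₁ : ℝ) := by
    rw [show (3 : ℝ) / 2 = 1 + 1 / 2 by norm_num, Real.rpow_add hPpos, Real.rpow_one,
      ← Real.sqrt_eq_rpow]
  -- characters
  set χ₁s := χ₁.ringHomComp (starRingEnd ℂ) with hχ₁s
  set χ₂s := χ₂.ringHomComp (starRingEnd ℂ) with hχ₂s
  set χ₃s := χ₃.ringHomComp (starRingEnd ℂ) with hχ₃s
  set N : ZMod p₁ := ((n : ℤ) : ZMod p₁) with hN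
  have hQbase : ((p₂ : ℕ) : ZMod p₁) ≠ 0 := by
    rw [Ne, ZMod.natCast_eq_zero_iff]
    intro hd
    exact hne ((Nat.prime_dvd_prime_iff_eq hp₁ hp₂).mp hd)
  set Q : ZMod p₁ := ((p₂ : ℕ) : ZMod p₁) ^ 2 with hQdef
  have hQ : Q ≠ 0 := pow_ne_zero 2 hQbase
  set g : ZMod p₁ → ℂ := fun w =>
    V χ₁s w * V χ₂s 0 * V χ₃s (w * Q) * ZMod.stdAddChar (-(w * N)) with hg
  -- Step 1 : rewrite Bsum
  have step1 : Bsum p₁ 1 ((p₁ : ℤ) ^ 2) ((p₂ : ℤ) ^ 2) n χ₁ χ₂ χ₃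
      = ((p₁.totient : ℂ))⁻¹ ^ 3 * ∑ w ∈ univ.erase (0 : ZMod p₁), g w := by
    rw [Bsum, ← sum_coprime_eq g]
    congr 1
    refine Finset.sum_congr rfl fun a _ => ?_
    have h1 : Schar χ₁ ((a : ℤ) * 1) = V χ₁s ((a : ℕ) : ZMod p₁) := by
      rw [Schar_eq]
      congr 1
      push_cast
      ring
    have h2 : Schar χ₂ ((a : ℤ) * (p₁ : ℤ) ^ 2) = V χ₂s 0 := by
      rw [Schar_eq]
      congr 1
      push_cast
      rw [ZMod.natCast_self]
      ring
    have h3 : Schar χ₃ ((a : ℤ) * (p₂ : ℤ) ^ 2) = V χ₃s (((a : ℕ) : ZMod p₁) * Q) := by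
      rw [Schar_eq]
      congr 1
      push_cast
      ring
    have h4 : Complex.exp (-(2 * (Real.pi : ℂ) * Complex.I * ((a : ℂ) * (n : ℂ)) / (p₁ : ℂ)))
        = ZMod.stdAddChar (-(((a : ℕ) : ZMod p₁) * N)) := by
      have hcast : ((-(a * n) : ℤ) : ZMod p₁) = -(((a : ℕ) : ZMod p₁) * N) := by
        push_cast
        ring
      rw [← hcast, psi_int]
      congr 1
      push_cast
      ring
    rw [h1, h2, h3, h4]
  have habsB : Complex.abs (Bsum p₁ 1 ((p₁ : ℤ) ^ 2) ((p₂ : ℤ) ^ 2) n χ₁ χ₂ χ₃)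
      = (((p₁ : ℝ) - 1)⁻¹) ^ 3 * Complex.abs (∑ w ∈ univ.erase (0 : ZMod p₁), g w) := by
    rw [step1, map_mul, map_pow, map_inv₀, Complex.abs_natCast, Nat.totient_prime hp₁]
    congr 3
    push_cast [Nat.cast_sub hp₁.one_lt.le]
    ring
  by_cases hN0 : N = 0
  -- Case p₁ ∣ n
  · have hgcd : (Int.gcd n (p₁ : ℤ) : ℝ) = (p₁ : ℝ) := by
      have hdvd : ((p₁ : ℕ) : ℤ) ∣ n := (ZMod.intCast_zmod_eq_zero_iff_dvd n p₁).mp hN0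
      have hg' := Int.gcd_eq_right (by positivity) hdvd
      have hg'' : Int.gcd n (p₁ : ℤ) = p₁ := by exact_mod_cast hg'
      rw [hg'']
    have hCS : ∑ w : ZMod p₁, Complex.abs (V χ₁s w) * Complex.abs (V χ₃s (w * Q))
        ≤ 2 * (p₁ : ℝ) * ((p₁ : ℝ) - 1) := by
      have hm1 := moment hodd χ₁s
      have hm3 := moment hodd χ₃s
      have hre : ∑ w : ZMod p₁, (Complex.abs (V χ₃s (w * Q))) ^ 2
          = ∑ w : ZMod p₁, (Complex.abs (V χ₃s w)) ^ 2 :=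
        Equiv.sum_comp (Equiv.mulRight₀ Q hQ) (fun w => (Complex.abs (V χ₃s w)) ^ 2)
      have hcs := Finset.sum_mul_sq_le_sq_mul_sq univ (fun w => Complex.abs (V χ₁s w))
        (fun w => Complex.abs (V χ₃s (w * Q)))
      have hnn : (0 : ℝ) ≤ ∑ w : ZMod p₁, Complex.abs (V χ₁s w) * Complex.abs (V χ₃s (w * Q)) :=
        Finset.sum_nonneg fun w _ => mul_nonneg (Complex.abs.nonneg _) (Complex.abs.nonneg _)
      rw [hre] at hcs
      have hB : (0:ℝ) ≤ 2 * (p₁ : ℝ) * ((p₁ : ℝ) - 1) := by positivity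
      nlinarith [hcs, hm1, hm3, hnn,
        Finset.sum_nonneg (fun w (_ : w ∈ univ) => sq_nonneg (Complex.abs (V χ₁s w))),
        Finset.sum_nonneg (fun w (_ : w ∈ univ) => sq_nonneg (Complex.abs (V χ₃s w)))]
    have hsum_bound : Complex.abs (∑ w ∈ univ.erase (0 : ZMod p₁), g w)
        ≤ ((p₁ : ℝ) - 1) * (2 * (p₁ : ℝ) * ((p₁ : ℝ) - 1)) := by
      refine le_trans (Complex.abs.sum_le _ _) ?_
      have hterm : ∀ w : ZMod p₁, Complex.abs (g w)
          ≤ ((p₁ : ℝ) - 1) * (Complex.abs (V χ₁s w) * Complex.abs (V χ₃s (w * Q))) := by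
        intro w
        have : g w = V χ₂s 0 * (V χ₁s w * V χ₃s (w * Q)) := by
          rw [hg]
          dsimp only
          rw [hN0, mul_zero, neg_zero, AddChar.map_zero_eq_one]
          ring
        rw [this, map_mul, map_mul]
        exact mul_le_mul_of_nonneg_right (abs_V_le χ₂s 0)
          (mul_nonneg (Complex.abs.nonneg _) (Complex.abs.nonneg _))
      calc ∑ w ∈ univ.erase (0 : ZMod p₁), Complex.abs (g w)
          ≤ ∑ w ∈ univ.erase (0 : ZMod p₁),
              ((p₁ : ℝ) - 1) * (Complex.abs (V χ₁s w) * Complex.abs (V χ₃s (w * Q))) :=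
            Finset.sum_le_sum fun w _ => hterm w
        _ ≤ ∑ w : ZMod p₁,
              ((p₁ : ℝ) - 1) * (Complex.abs (V χ₁s w) * Complex.abs (V χ₃s (w * Q))) :=
            Finset.sum_le_sum_of_subset_of_nonneg (Finset.subset_univ _)
              (fun w _ _ => by positivity)
        _ = ((p₁ : ℝ) - 1) * ∑ w : ZMod p₁,
              Complex.abs (V χ₁s w) * Complex.abs (V χ₃s (w * Q)) := by
            rw [Finset.mul_sum]
        _ ≤ ((p₁ : ℝ) - 1) * (2 * (p₁ : ℝ) * ((p₁ : ℝ) - 1)) :=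
            mul_le_mul_of_nonneg_left hCS hP1.le
    rw [habsB, hgcd, hrpow]
    have hle : (((p₁ : ℝ) - 1)⁻¹) ^ 3
        * Complex.abs (∑ w ∈ univ.erase (0 : ZMod p₁), g w)
        ≤ (((p₁ : ℝ) - 1)⁻¹) ^ 3 * (((p₁ : ℝ) - 1) * (2 * (p₁ : ℝ) * ((p₁ : ℝ) - 1))) :=
      mul_le_mul_of_nonneg_left hsum_bound (by positivity)
    refine le_trans hle ?_
    have hid : (((p₁ : ℝ) - 1)⁻¹) ^ 3 * (((p₁ : ℝ) - 1) * (2 * (p₁ : ℝ) * ((p₁ : ℝ) - 1)))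
        = 2 * (p₁ : ℝ) / ((p₁ : ℝ) - 1) := by
      field_simp
    rw [hid, div_le_div_iff₀ hP1 (by positivity)]
    nlinarith [hsqP, hP3, hP1, hPpos, hsqPnn, mul_pos hPpos hP1]
  -- Case p₁ ∤ n
  · obtain ⟨γ, hγ⟩ := FiniteField.exists_nonsquare (F := ZMod p₁)
      (by rw [ZMod.ringChar_zmod_n]; exact hodd)
    have hγ0 : γ ≠ 0 := by rintro rfl; exact hγ ⟨0, by simp⟩
    have hmN : (-N : ZMod p₁) ≠ 0 := neg_ne_zero.mpr hN0
    set lam : DirichletCharacter ℂ p₁ := (χ₁s * χ₃s)⁻¹ with hlamdef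
    have hlam : ∀ c : ZMod p₁, χ₁s c⁻¹ * χ₃s c⁻¹ = lam c := by
      intro c
      rw [hlamdef, MulChar.inv_apply', MulChar.mul_apply]
    have hterm1 : ∀ c : ZMod p₁, c ≠ 0 → g (1 * c ^ 2)
        = V χ₂s 0 * (V χ₁s 1 * V χ₃s Q) * (lam c * ZMod.stdAddChar ((-N) * c ^ 2)) := by
      intro c hc
      rw [hg]
      dsimp only
      rw [V_mul_sq χ₁s 1 hc]
      rw [show (1 * c ^ 2) * Q = Q * c ^ 2 by ring, V_mul_sq χ₃s Q hc]
      rw [show -((1 * c ^ 2) * N) = (-N) * c ^ 2 by ring]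
      rw [← hlam c]
      ring
    have hterm2 : ∀ c : ZMod p₁, c ≠ 0 → g (1 * γ * c ^ 2)
        = V χ₂s 0 * (V χ₁s (1 * γ) * V χ₃s (Q * γ))
            * (lam c * ZMod.stdAddChar (((-N) * γ) * c ^ 2)) := by
      intro c hc
      rw [hg]
      dsimp only
      rw [show (1 : ZMod p₁) * γ * c ^ 2 = (1 * γ) * c ^ 2 by ring, V_mul_sq χ₁s (1 * γ) hc]
      rw [show ((1 * γ) * c ^ 2) * Q = (Q * γ) * c ^ 2 by ring, V_mul_sq χ₃s (Q * γ) hc]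
      rw [show -(((1 * γ) * c ^ 2) * N) = ((-N) * γ) * c ^ 2 by ring]
      rw [← hlam c]
      ring
    have hsub : ∀ v : ZMod p₁,
        ∑ c ∈ univ.erase (0 : ZMod p₁), (lam c * ZMod.stdAddChar (v * c ^ 2)) = V lam v := by
      intro v
      rw [V]
      refine Finset.sum_erase _ ?_
      rw [char_zero' lam, zero_mul]
    have hcount := counting (M := ℂ) hodd g (u := (1 : ZMod p₁)) one_ne_zero hγ
    have hkey : (2 : ℂ) * ∑ w ∈ univ.erase (0 : ZMod p₁), g w
        = V χ₂s 0 * (V χ₁s 1 * V χ₃s Q) * V lam (-N)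
          + V χ₂s 0 * (V χ₁s (1 * γ) * V χ₃s (Q * γ)) * V lam ((-N) * γ) := by
      have h2smul : (2 : ℂ) * ∑ w ∈ univ.erase (0 : ZMod p₁), g w
          = 2 • ∑ w ∈ univ.erase (0 : ZMod p₁), g w := by
        rw [nsmul_eq_mul]
        norm_num
      rw [h2smul, ← hcount, Finset.sum_add_distrib]
      congr 1
      · calc ∑ c ∈ univ.erase (0 : ZMod p₁), g (1 * c ^ 2)
            = ∑ c ∈ univ.erase (0 : ZMod p₁),
                V χ₂s 0 * (V χ₁s 1 * V χ₃s Q) * (lam c * ZMod.stdAddChar ((-N) * c ^ 2)) :=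
              Finset.sum_congr rfl fun c hc => hterm1 c (Finset.mem_erase.mp hc).1
          _ = V χ₂s 0 * (V χ₁s 1 * V χ₃s Q)
                * ∑ c ∈ univ.erase (0 : ZMod p₁), (lam c * ZMod.stdAddChar ((-N) * c ^ 2)) := by
              rw [Finset.mul_sum]
          _ = V χ₂s 0 * (V χ₁s 1 * V χ₃s Q) * V lam (-N) := by rw [hsub]
      · calc ∑ c ∈ univ.erase (0 : ZMod p₁), g (1 * γ * c ^ 2)
            = ∑ c ∈ univ.erase (0 : ZMod p₁),
                V χ₂s 0 * (V χ₁s (1 * γ) * V χ₃s (Q * γ))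
                  * (lam c * ZMod.stdAddChar (((-N) * γ) * c ^ 2)) :=
              Finset.sum_congr rfl fun c hc => hterm2 c (Finset.mem_erase.mp hc).1
          _ = V χ₂s 0 * (V χ₁s (1 * γ) * V χ₃s (Q * γ))
                * ∑ c ∈ univ.erase (0 : ZMod p₁),
                    (lam c * ZMod.stdAddChar (((-N) * γ) * c ^ 2)) := by
              rw [Finset.mul_sum]
          _ = V χ₂s 0 * (V χ₁s (1 * γ) * V χ₃s (Q * γ)) * V lam ((-N) * γ) := by rw [hsub]
    -- numeric bound
    have hpair1 := pair_moment hodd χ₁s (u := (1 : ZMod p₁)) one_ne_zero hγ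
    have hpair3 := pair_moment hodd χ₃s (u := Q) hQ hγ
    have hpairL := pair_moment hodd lam (u := (-N)) hmN hγ
    have hcube := cube_bound (A := 4 * (p₁ : ℝ))
      (Complex.abs.nonneg (V χ₁s 1)) (Complex.abs.nonneg (V χ₁s (1 * γ)))
      (Complex.abs.nonneg (V χ₃s Q)) (Complex.abs.nonneg (V χ₃s (Q * γ)))
      (Complex.abs.nonneg (V lam (-N))) (Complex.abs.nonneg (V lam ((-N) * γ)))
      hpair1 hpair3 hpairL
    have hsqrt4P : Real.sqrt (4 * (p₁ : ℝ)) = 2 * Real.sqrt (p₁ : ℝ) := by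
      rw [Real.sqrt_mul (by norm_num : (0:ℝ) ≤ 4),
        show (4:ℝ) = 2 ^ 2 by norm_num, Real.sqrt_sq (by norm_num : (0:ℝ) ≤ 2)]
    have habs2 : 2 * Complex.abs (∑ w ∈ univ.erase (0 : ZMod p₁), g w)
        ≤ ((p₁ : ℝ) - 1) * (4 * (p₁ : ℝ) * (2 * Real.sqrt (p₁ : ℝ))) := by
      have e1 : 2 * Complex.abs (∑ w ∈ univ.erase (0 : ZMod p₁), g w)
          = Complex.abs ((2 : ℂ) * ∑ w ∈ univ.erase (0 : ZMod p₁), g w) := by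
        rw [map_mul, Complex.abs_two]
      rw [e1, hkey]
      refine le_trans (Complex.abs.add_le _ _) ?_
      rw [map_mul, map_mul, map_mul, map_mul, map_mul, map_mul]
      have hT := abs_V_le χ₂s 0
      have hTnn := Complex.abs.nonneg (V χ₂s 0)
      have hprod : Complex.abs (V χ₁s 1) * Complex.abs (V χ₃s Q) * Complex.abs (V lam (-N))
            + Complex.abs (V χ₁s (1 * γ)) * Complex.abs (V χ₃s (Q * γ))
              * Complex.abs (V lam ((-N) * γ))
          ≤ 4 * (p₁ : ℝ) * (2 * Real.sqrt (p₁ : ℝ)) := by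
        rw [← hsqrt4P]
        exact hcube
      have hstep : Complex.abs (V χ₂s 0)
            * (Complex.abs (V χ₁s 1) * Complex.abs (V χ₃s Q)) * Complex.abs (V lam (-N))
            + Complex.abs (V χ₂s 0) * (Complex.abs (V χ₁s (1 * γ)) * Complex.abs (V χ₃s (Q * γ)))
              * Complex.abs (V lam ((-N) * γ))
          ≤ ((p₁ : ℝ) - 1) * (4 * (p₁ : ℝ) * (2 * Real.sqrt (p₁ : ℝ))) := by
        have expand : Complex.abs (V χ₂s 0)
              * (Complex.abs (V χ₁s 1) * Complex.abs (V χ₃s Q)) * Complex.abs (V lam (-N))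
              + Complex.abs (V χ₂s 0)
                * (Complex.abs (V χ₁s (1 * γ)) * Complex.abs (V χ₃s (Q * γ)))
                * Complex.abs (V lam ((-N) * γ))
            = Complex.abs (V χ₂s 0)
                * (Complex.abs (V χ₁s 1) * Complex.abs (V χ₃s Q) * Complex.abs (V lam (-N))
                  + Complex.abs (V χ₁s (1 * γ)) * Complex.abs (V χ₃s (Q * γ))
                    * Complex.abs (V lam ((-N) * γ))) := by ring
        rw [expand]
        have hsumnn : (0:ℝ) ≤ Complex.abs (V χ₁s 1) * Complex.abs (V χ₃s Q)
              * Complex.abs (V lam (-N))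
            + Complex.abs (V χ₁s (1 * γ)) * Complex.abs (V χ₃s (Q * γ))
              * Complex.abs (V lam ((-N) * γ)) := by positivity
        calc Complex.abs (V χ₂s 0)
              * (Complex.abs (V χ₁s 1) * Complex.abs (V χ₃s Q) * Complex.abs (V lam (-N))
                + Complex.abs (V χ₁s (1 * γ)) * Complex.abs (V χ₃s (Q * γ))
                  * Complex.abs (V lam ((-N) * γ)))
            ≤ ((p₁ : ℝ) - 1)
              * (Complex.abs (V χ₁s 1) * Complex.abs (V χ₃s Q) * Complex.abs (V lam (-N))
                + Complex.abs (V χ₁s (1 * γ)) * Complex.abs (V χ₃s (Q * γ))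
                  * Complex.abs (V lam ((-N) * γ))) := mul_le_mul_of_nonneg_right hT hsumnn
          _ ≤ ((p₁ : ℝ) - 1) * (4 * (p₁ : ℝ) * (2 * Real.sqrt (p₁ : ℝ))) :=
              mul_le_mul_of_nonneg_left hprod hP1.le
      exact hstep
    have hsum_bound : Complex.abs (∑ w ∈ univ.erase (0 : ZMod p₁), g w)
        ≤ ((p₁ : ℝ) - 1) * (4 * (p₁ : ℝ) * Real.sqrt (p₁ : ℝ)) := by
      nlinarith [habs2]
    have hgcd1 : (1 : ℝ) ≤ Real.sqrt (Int.gcd n (p₁ : ℤ)) := by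
      have hpos : 0 < Int.gcd n (p₁ : ℤ) := Int.gcd_pos_iff.mpr
        (Or.inr (by exact_mod_cast hp₁.pos.ne'))
      have h1 : (1 : ℝ) ≤ (Int.gcd n (p₁ : ℤ) : ℝ) := by exact_mod_cast hpos
      calc (1 : ℝ) = Real.sqrt 1 := Real.sqrt_one.symm
        _ ≤ Real.sqrt (Int.gcd n (p₁ : ℤ)) := Real.sqrt_le_sqrt h1
    rw [habsB, hrpow]
    have hle : (((p₁ : ℝ) - 1)⁻¹) ^ 3
        * Complex.abs (∑ w ∈ univ.erase (0 : ZMod p₁), g w)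
        ≤ (((p₁ : ℝ) - 1)⁻¹) ^ 3 * (((p₁ : ℝ) - 1) * (4 * (p₁ : ℝ) * Real.sqrt (p₁ : ℝ))) :=
      mul_le_mul_of_nonneg_left hsum_bound (by positivity)
    refine le_trans hle ?_
    have hid : (((p₁ : ℝ) - 1)⁻¹) ^ 3 * (((p₁ : ℝ) - 1) * (4 * (p₁ : ℝ) * Real.sqrt (p₁ : ℝ)))
        = 4 * (p₁ : ℝ) * Real.sqrt (p₁ : ℝ) / ((p₁ : ℝ) - 1) ^ 2 := by
      field_simp
    rw [hid]
    have hmono : 4 * (p₁ : ℝ) * Real.sqrt (p₁ : ℝ)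
        ≤ 4 * Real.sqrt (Int.gcd n (p₁ : ℤ)) * ((p₁ : ℝ) * Real.sqrt (p₁ : ℝ)) := by
      have h := mul_le_mul_of_nonneg_right hgcd1
        (show (0:ℝ) ≤ 4 * ((p₁ : ℝ) * Real.sqrt (p₁ : ℝ)) by positivity)
      calc 4 * (p₁ : ℝ) * Real.sqrt (p₁ : ℝ)
          = 1 * (4 * ((p₁ : ℝ) * Real.sqrt (p₁ : ℝ))) := by ring
        _ ≤ Real.sqrt (Int.gcd n (p₁ : ℤ)) * (4 * ((p₁ : ℝ) * Real.sqrt (p₁ : ℝ))) := h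
        _ = 4 * Real.sqrt (Int.gcd n (p₁ : ℤ)) * ((p₁ : ℝ) * Real.sqrt (p₁ : ℝ)) := by ring
    exact div_le_div_of_nonneg_right hmono (by positivity) |>.trans_eq rfl
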